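/- For every integer n ≥ 2, the function t ↦ t^(n−1)·Γ(t)/(t^(n−1) − 1) is strictly increasing on (1, ∞), where Γ(r) = ln(r) if n = 2 and Γ(r) = (1/(n−2))·(1 − r^(2−n)) if n ≥ 3. -/

import Mathlib

noncomputable def Gam (n : ℕ) (r : ℝ) : ℝ :=
  if n = 2 then Real.log r else (1 / ((n : ℝ) - 2)) * (1 - r ^ ((2 : ℝ) - (n : ℝ)))

lemma aux_two : StrictMonoOn (fun t : ℝ => t * Real.log t / (t - 1)) (Set.Ioi 1) := by
  apply strictMonoOn_of_deriv_pos (convex_Ioi 1)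
  · apply ContinuousOn.div
    · exact continuousOn_id.mul (Real.continuousOn_log.mono (by
        intro x hx
        simp only [Set.mem_compl_iff, Set.mem_singleton_iff]
        intro h; subst h; exact absurd hx (by simp)))
    · exact (continuous_sub_right 1).continuousOn
    · intro x hx
      exact sub_ne_zero.2 (ne_of_gt hx)
  · rw [interior_Ioi]
    intro x hx
    have hx1 : (1:ℝ) < x := hx
    have hx0 : (0:ℝ) < x := lt_trans one_pos hx1
    have h1 : HasDerivAt (fun t : ℝ => t * Real.log t) (Real.log x + 1) x := by
      have := (hasDerivAt_id x).mul (Real.hasDerivAt_log (ne_of_gt hx0))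
      exact this.congr_deriv (by simp [hx0.ne'])
    have h2 : HasDerivAt (fun t : ℝ => t - 1) 1 x := (hasDerivAt_id x).sub_const 1
    have h3 := h1.div h2 (sub_ne_zero.2 (ne_of_gt hx1))
    rw [show deriv (fun t : ℝ => t * Real.log t / (t - 1)) x = _ from h3.deriv]
    apply div_pos
    · have hlog := Real.log_lt_sub_one_of_pos hx0 (ne_of_gt hx1)
      nlinarith
    · exact pow_pos (sub_pos.2 hx1) 2

theorem stmt_3 (n : ℕ) (hn : 2 ≤ n) :
    StrictMonoOn (fun t : ℝ => t ^ ((n : ℝ) - 1) * Gam n t / (t ^ ((n : ℝ) - 1) - 1))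
      (Set.Ioi 1) := by
  rcases eq_or_lt_of_le hn with h2 | h3
  · -- n = 2
    subst h2
    have heq : Set.EqOn (fun t : ℝ => t * Real.log t / (t - 1))
        (fun t : ℝ => t ^ (((2:ℕ) : ℝ) - 1) * Gam 2 t / (t ^ (((2:ℕ) : ℝ) - 1) - 1))
        (Set.Ioi 1) := by
      intro t ht
      norm_num [Gam, Real.rpow_one]
    exact aux_two.congr heq
  · -- 3 ≤ n
    have hn3 : 3 ≤ n := h3
    have hn2 : n ≠ 2 := by omega
    obtain ⟨j, hj⟩ : ∃ j, n = j + 3 := ⟨n - 3, by omega⟩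
    subst hj
    have hj0 : (0:ℝ) ≤ (j:ℝ) := Nat.cast_nonneg j
    have hcpos : (0:ℝ) < ((j + 3 : ℕ) : ℝ) - 2 := by push_cast; linarith
    have hcast : ((j + 3 : ℕ) : ℝ) - 1 = ((j + 2 : ℕ) : ℝ) := by push_cast; ring
    have hcast2 : (2 : ℝ) - ((j + 3 : ℕ) : ℝ) = -(((j + 1 : ℕ)) : ℝ) := by push_cast; ring
    have key : ∀ t : ℝ, t ∈ Set.Ioi (1:ℝ) →
        t ^ (((j + 3 : ℕ) : ℝ) - 1) * Gam (j + 3) t / (t ^ (((j + 3 : ℕ) : ℝ) - 1) - 1)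
          = (1 / (((j + 3 : ℕ) : ℝ) - 2)) * (1 - (∑ i ∈ Finset.range (j + 2), t ^ i)⁻¹) := by
      intro t ht
      have ht1 : (1:ℝ) < t := ht
      have ht0 : (0:ℝ) < t := lt_trans one_pos ht1
      have htne : t ≠ 1 := ne_of_gt ht1
      have hpow : (1:ℝ) < t ^ (j + 2) := one_lt_pow₀ ht1 (by omega)
      have hden : t ^ (j + 2) - 1 ≠ 0 := sub_ne_zero.2 (ne_of_gt hpow)
      have h1 : t ^ (((j + 3 : ℕ) : ℝ) - 1) = t ^ (j + 2) := by
        rw [hcast, Real.rpow_natCast]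
      have h2 : t ^ ((2 : ℝ) - ((j + 3 : ℕ) : ℝ)) = (t ^ (j + 1))⁻¹ := by
        rw [hcast2, Real.rpow_neg ht0.le, Real.rpow_natCast]
      have ht1' : t - 1 ≠ 0 := sub_ne_zero.2 htne
      have hc : ((j + 3 : ℕ) : ℝ) - 2 ≠ 0 := ne_of_gt hcpos
      have htp : t ^ (j + 1) ≠ 0 := pow_ne_zero _ (ne_of_gt ht0)
      simp only [Gam, if_neg hn2, h1, h2, geom_sum_eq htne, inv_div]
      have e0 : t ^ (j + 2) * (t ^ (j + 1))⁻¹ = t := by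
        rw [show j + 2 = (j + 1) + 1 from rfl, pow_succ, mul_comm (t ^ (j+1)) t,
          mul_assoc, mul_inv_cancel₀ htp, mul_one]
      have e1 : t ^ (j + 2) * (1 / (((j + 3 : ℕ) : ℝ) - 2) * (1 - (t ^ (j + 1))⁻¹))
          = 1 / (((j + 3 : ℕ) : ℝ) - 2) * (t ^ (j + 2) - t) := by
        rw [mul_left_comm, mul_sub, mul_one, e0]
      rw [e1]
      field_simp
      ring
    intro x hx y hy hxy
    simp only []
    rw [key x hx, key y hy]
    have hx1 : (1:ℝ) < x := hx
    have hx0 : (0:ℝ) < x := lt_trans one_pos hx1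
    have hApos : (0:ℝ) < ∑ i ∈ Finset.range (j + 2), x ^ i :=
      Finset.sum_pos (fun i _ => pow_pos hx0 i) ⟨0, by simp⟩
    have hsum : ∑ i ∈ Finset.range (j + 2), x ^ i < ∑ i ∈ Finset.range (j + 2), y ^ i := by
      apply Finset.sum_lt_sum
      · intro i _
        exact pow_le_pow_left₀ hx0.le hxy.le i
      · refine ⟨1, Finset.mem_range.2 (by omega), ?_⟩
        simpa using hxy
    have hc : (0:ℝ) < 1 / (((j + 3 : ℕ) : ℝ) - 2) := by positivity
    apply mul_lt_mul_of_pos_left _ hc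
    apply sub_lt_sub_left
    exact inv_strictAnti₀ hApos hsum
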